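/- If K and K′ are n-dimensional opetopic directed complexes such that the opetopic sequences G_0^−(⟨K⟩) → … → G_n^−(⟨K⟩) and G_0^−(⟨K′⟩) → … → G_n^−(⟨K′⟩) are isomorphic, then K and K′ are isomorphic as opetopic directed complexes (i.e., there is a dimension-preserving bijection between their distinguished bases, preserving thinness, whose linear extension is a chain isomorphism commuting with the boundaries and augmentations). -/

import Mathlib

open Finsupp

/-- A free augmented directed complex, encoded by its distinguished graded basis:
`B` is the set of basis elements, `dim` the dimension function, `bd a` the boundary
chain of a basis element `a`, and `eps` the augmentation (supported in dimension 0). -/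
structure FADC where
  B : Type
  dim : B → ℕ
  bd : B → (B →₀ ℤ)
  eps : B → ℤ
  bd_dim : ∀ a b, b ∈ (bd a).support → dim b + 1 = dim a
  eps_dim : ∀ b, 0 < dim b → eps b = 0
  bd_bd : ∀ a : B, ((bd a).sum fun b n => n • bd b) = 0
  eps_bd : ∀ a : B, ((bd a).sum fun b n => n * eps b) = 0

namespace FADC

variable (K : FADC)

/-- The boundary homomorphism `∂`, extended to chains. -/
noncomputable def bdc (c : K.B →₀ ℤ) : K.B →₀ ℤ := c.sum fun b n => n • K.bd b

/-- The augmentation `ε`, extended to chains. -/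
noncomputable def epsc (c : K.B →₀ ℤ) : ℤ := c.sum fun b n => n * K.eps b

/-- `∂⁺c`, the positive part of `∂c`. -/
noncomputable def bdp (c : K.B →₀ ℤ) : K.B →₀ ℤ := (K.bdc c).mapRange (fun n => max n 0) (by simp)

/-- `∂⁻c`, the negative part of `∂c`. -/
noncomputable def bdm (c : K.B →₀ ℤ) : K.B →₀ ℤ := (-K.bdc c).mapRange (fun n => max n 0) (by simp)

/-- `K` is unital if `ε((∂⁻)^q a) = ε((∂⁺)^q a) = 1` for every `q`-dimensional
basis element `a`. -/
def Unital : Prop := ∀ a : K.B,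
  K.epsc (K.bdm^[K.dim a] (Finsupp.single a 1)) = 1 ∧
  K.epsc (K.bdp^[K.dim a] (Finsupp.single a 1)) = 1

/-- `K` is loop-free if its basis elements admit a (strict) partial order such that
for every basis element `a` and every `r > 0`, the basis elements occurring in
`(∂⁻)^r a` strictly precede those occurring in `(∂⁺)^r a`. -/
def LoopFree : Prop :=
  ∃ lt : K.B → K.B → Prop, IsStrictOrder K.B lt ∧
    ∀ (a : K.B) (r : ℕ), 0 < r →
      ∀ b ∈ (K.bdm^[r] (Finsupp.single a 1)).support,
        ∀ b' ∈ (K.bdp^[r] (Finsupp.single a 1)).support, lt b b'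

/-- `K` is atomic of dimension `n`. -/
def Atomic (n : ℕ) : Prop :=
  (∀ b : K.B, K.dim b ≤ n) ∧
  (∃! g : K.B, K.dim g = n) ∧
  (∀ b : K.B, K.dim b < n → ∃ a : K.B, K.dim b < K.dim a ∧
    (b ∈ (K.bdm (Finsupp.single a 1)).support ∨ b ∈ (K.bdp (Finsupp.single a 1)).support))

/-- `g_q^α(x)`: given `x_q^- = xq` and `x_{q+1}^α = c`, this is
`x_q^- + ∂⁺a_1 + … + ∂⁺a_k` where `a_1, …, a_k` are the terms of `c`. -/
noncomputable def gch (xq c : K.B →₀ ℤ) : K.B →₀ ℤ :=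
  xq + c.sum fun b n => n • K.bdp (Finsupp.single b 1)

/-- The negative chains `⟨K⟩_q^- = (∂⁻)^{n-q} g` of the canonical atom. -/
noncomputable def atomNeg (g : K.B) (n q : ℕ) : K.B →₀ ℤ :=
  if q ≤ n then K.bdm^[n - q] (Finsupp.single g 1) else 0

/-- The positive chains `⟨K⟩_q^+ = (∂⁺)^{n-q} g` of the canonical atom. -/
noncomputable def atomPos (g : K.B) (n q : ℕ) : K.B →₀ ℤ :=
  if q ≤ n then K.bdp^[n - q] (Finsupp.single g 1) else 0



theorem bdc_eq (c : K.B →₀ ℤ) : K.bdc c = Finsupp.linearCombination ℤ K.bd c := by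
  rw [Finsupp.linearCombination_apply]; rfl

theorem bdc_apply (c : K.B →₀ ℤ) (x : K.B) :
    K.bdc c x = ∑ b ∈ c.support, c b * K.bd b x := by
  rw [bdc, Finsupp.sum_apply]
  simp [Finsupp.sum, Finsupp.smul_apply, smul_eq_mul]

theorem bdc_single (b : K.B) : K.bdc (Finsupp.single b 1) = K.bd b := by
  rw [bdc, Finsupp.sum_single_index] <;> simp

theorem bdc_add (c d : K.B →₀ ℤ) : K.bdc (c + d) = K.bdc c + K.bdc d := by
  rw [bdc_eq, bdc_eq, bdc_eq, map_add]

theorem bdc_zero : K.bdc 0 = 0 := by rw [bdc_eq, map_zero]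

theorem bdc_bdc (c : K.B →₀ ℤ) : K.bdc (K.bdc c) = 0 := by
  induction c using Finsupp.induction_linear with
  | zero => rw [bdc_zero, bdc_zero]
  | add f g hf hg => rw [bdc_add, bdc_add, hf, hg, add_zero]
  | single a b =>
      have h1 : (Finsupp.single a b : K.B →₀ ℤ) = b • Finsupp.single a 1 := by
        rw [Finsupp.smul_single, smul_eq_mul, mul_one]
      rw [h1]
      have h2 : K.bdc (b • Finsupp.single a 1) = b • K.bd a := by
        rw [bdc_eq, map_smul, ← bdc_eq, bdc_single]
      rw [h2, bdc_eq, map_smul, ← bdc_eq]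
      have h3 : K.bdc (K.bd a) = 0 := K.bd_bd a
      rw [h3, smul_zero]

theorem bdp_apply (c : K.B →₀ ℤ) (x : K.B) : K.bdp c x = max (K.bdc c x) 0 := by
  rw [bdp, Finsupp.mapRange_apply]

theorem bdm_apply (c : K.B →₀ ℤ) (x : K.B) : K.bdm c x = max (-(K.bdc c x)) 0 := by
  rw [bdm, Finsupp.mapRange_apply, Finsupp.neg_apply]

theorem bdp_nonneg (c : K.B →₀ ℤ) (x : K.B) : 0 ≤ K.bdp c x := by
  rw [bdp_apply]; omega

theorem bdm_nonneg (c : K.B →₀ ℤ) (x : K.B) : 0 ≤ K.bdm c x := by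
  rw [bdm_apply]; omega

theorem bdp_sub_bdm (c : K.B →₀ ℤ) : K.bdp c - K.bdm c = K.bdc c := by
  ext x
  rw [Finsupp.sub_apply, bdp_apply, bdm_apply]; omega

theorem mem_support_bdp {c : K.B →₀ ℤ} {x : K.B} :
    x ∈ (K.bdp c).support ↔ 0 < K.bdc c x := by
  rw [Finsupp.mem_support_iff, bdp_apply]; omega

theorem mem_support_bdm {c : K.B →₀ ℤ} {x : K.B} :
    x ∈ (K.bdm c).support ↔ K.bdc c x < 0 := by
  rw [Finsupp.mem_support_iff, bdm_apply]; omega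

theorem bdc_bdp_eq_bdc_bdm (c : K.B →₀ ℤ) : K.bdc (K.bdp c) = K.bdc (K.bdm c) := by
  have h1 : K.bdp c = K.bdm c + K.bdc c := by
    rw [← bdp_sub_bdm]; abel
  rw [h1, bdc_add, bdc_bdc, add_zero]

theorem bdp_bdp (c : K.B →₀ ℤ) : K.bdp (K.bdp c) = K.bdp (K.bdm c) := by
  ext x; rw [bdp_apply, bdp_apply, bdc_bdp_eq_bdc_bdm]

theorem bdm_bdm' (c : K.B →₀ ℤ) : K.bdm (K.bdp c) = K.bdm (K.bdm c) := by
  ext x; rw [bdm_apply, bdm_apply, bdc_bdp_eq_bdc_bdm]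

theorem bdm_zero : K.bdm 0 = 0 := by
  ext x; rw [bdm_apply, bdc_zero]; simp

theorem bdp_zero : K.bdp 0 = 0 := by
  ext x; rw [bdp_apply, bdc_zero]; simp

theorem dim_mem_bdc {c : K.B →₀ ℤ} {x : K.B} {q : ℕ}
    (hc : ∀ b ∈ c.support, K.dim b = q + 1) (hx : x ∈ (K.bdc c).support) : K.dim x = q := by
  rw [Finsupp.mem_support_iff, bdc_apply] at hx
  obtain ⟨b, hb, hne⟩ : ∃ b ∈ c.support, c b * K.bd b x ≠ 0 := by
    by_contra hall
    push_neg at hall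
    exact hx (Finset.sum_eq_zero hall)
  have h2 : K.bd b x ≠ 0 := fun h => hne (by rw [h, mul_zero])
  have := K.bd_dim b x (Finsupp.mem_support_iff.2 h2)
  have := hc b hb
  omega

theorem dim_mem_bdm {c : K.B →₀ ℤ} {x : K.B} {q : ℕ}
    (hc : ∀ b ∈ c.support, K.dim b = q + 1) (hx : x ∈ (K.bdm c).support) : K.dim x = q :=
  K.dim_mem_bdc hc (by rw [Finsupp.mem_support_iff]; have := (K.mem_support_bdm).1 hx; omega)

theorem dim_mem_bdp {c : K.B →₀ ℤ} {x : K.B} {q : ℕ}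
    (hc : ∀ b ∈ c.support, K.dim b = q + 1) (hx : x ∈ (K.bdp c).support) : K.dim x = q :=
  K.dim_mem_bdc hc (by rw [Finsupp.mem_support_iff]; have := (K.mem_support_bdp).1 hx; omega)

theorem supp_bdp_biUnion {c : K.B →₀ ℤ} (hc : ∀ x, 0 ≤ c x) {x : K.B}
    (hx : x ∈ (K.bdp c).support) : ∃ b ∈ c.support, x ∈ (K.bdp (Finsupp.single b 1)).support := by
  rw [mem_support_bdp, bdc_apply] at hx
  obtain ⟨b, hb, hpos⟩ : ∃ b ∈ c.support, 0 < c b * K.bd b x := by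
    by_contra hall
    push_neg at hall
    have := Finset.sum_nonpos hall
    omega
  refine ⟨b, hb, ?_⟩
  rw [mem_support_bdp, bdc_single]
  nlinarith [hc b]

theorem supp_bdm_biUnion {c : K.B →₀ ℤ} (hc : ∀ x, 0 ≤ c x) {x : K.B}
    (hx : x ∈ (K.bdm c).support) : ∃ b ∈ c.support, x ∈ (K.bdm (Finsupp.single b 1)).support := by
  rw [mem_support_bdm, bdc_apply] at hx
  obtain ⟨b, hb, hneg⟩ : ∃ b ∈ c.support, c b * K.bd b x < 0 := by
    by_contra hall
    push_neg at hall
    have := Finset.sum_nonneg hall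
    omega
  refine ⟨b, hb, ?_⟩
  rw [mem_support_bdm, bdc_single]
  have := hc b
  nlinarith [hc b]


theorem atomNeg_last (g : K.B) (n : ℕ) : K.atomNeg g n n = Finsupp.single g 1 := by
  simp [atomNeg]

theorem atomNeg_gt (g : K.B) {n q : ℕ} (h : n < q) : K.atomNeg g n q = 0 := by
  simp [atomNeg, Nat.not_le.2 h]

theorem atomNeg_step (g : K.B) {n q : ℕ} (h : q < n) :
    K.atomNeg g n q = K.bdm (K.atomNeg g n (q + 1)) := by
  rw [atomNeg, atomNeg, if_pos h.le, if_pos (show q + 1 ≤ n by omega),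
    show n - q = (n - (q + 1)) + 1 by omega, Function.iterate_succ_apply']

theorem atomNeg_nonneg (g : K.B) (n q : ℕ) (x : K.B) : 0 ≤ K.atomNeg g n q x := by
  classical
  rcases lt_trichotomy q n with h | h | h
  · rw [K.atomNeg_step g h]; exact K.bdm_nonneg _ _
  · subst h; rw [atomNeg_last, Finsupp.single_apply]; split <;> omega
  · rw [K.atomNeg_gt g h]; simp

theorem atomPos_last (g : K.B) (n : ℕ) : K.atomPos g n n = Finsupp.single g 1 := by
  simp [atomPos]

theorem atomPos_step (g : K.B) {n q : ℕ} (h : q < n) :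
    K.atomPos g n q = K.bdp (K.atomPos g n (q + 1)) := by
  rw [atomPos, atomPos, if_pos h.le, if_pos (show q + 1 ≤ n by omega),
    show n - q = (n - (q + 1)) + 1 by omega, Function.iterate_succ_apply']

theorem bdp_atomNeg (g : K.B) {n q : ℕ} (h : q < n) :
    K.bdp (K.atomNeg g n (q + 1)) = K.atomPos g n q := by
  have main : ∀ d q : ℕ, q < n → n - (q+1) = d →
      K.bdp (K.atomNeg g n (q + 1)) = K.atomPos g n q := by
    intro d
    induction d with
    | zero =>
        intro q hq hd
        have he : q + 1 = n := by omega
        rw [he, atomNeg_last, K.atomPos_step g hq, he, atomPos_last]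
    | succ d ih =>
        intro q hq hd
        have hq1 : q + 1 < n := by omega
        rw [K.atomNeg_step g hq1, ← bdp_bdp, ih (q+1) hq1 (by omega),
          K.atomPos_step g hq]
  exact main _ q h rfl

theorem bdc_atomNeg (g : K.B) {n q : ℕ} (h : q < n) :
    K.bdc (K.atomNeg g n (q + 1)) = K.atomPos g n q - K.atomNeg g n q := by
  rw [← bdp_sub_bdm, K.bdp_atomNeg g h, ← K.atomNeg_step g h]

theorem atomNeg_dim (g : K.B) {n : ℕ} (hg : K.dim g = n) :
    ∀ q ≤ n, ∀ x ∈ (K.atomNeg g n q).support, K.dim x = q := by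
  have main : ∀ d q, q ≤ n → n - q = d → ∀ x ∈ (K.atomNeg g n q).support, K.dim x = q := by
    intro d
    induction d with
    | zero =>
        intro q hq hd x hx
        have : q = n := by omega
        subst this
        rw [atomNeg_last] at hx
        have hx2 : x = g := Finset.mem_singleton.1 (Finsupp.support_single_subset hx)
        rw [hx2, hg]
    | succ d ih =>
        intro q hq hd x hx
        have hq' : q < n := by omega
        rw [K.atomNeg_step g hq'] at hx
        exact K.dim_mem_bdm (fun b hb => ih (q+1) (by omega) (by omega) b hb) hx
  intro q hq; exact main (n - q) q hq rfl

theorem atomPos_dim (g : K.B) {n : ℕ} (hg : K.dim g = n) :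
    ∀ q ≤ n, ∀ x ∈ (K.atomPos g n q).support, K.dim x = q := by
  have main : ∀ d q, q ≤ n → n - q = d → ∀ x ∈ (K.atomPos g n q).support, K.dim x = q := by
    intro d
    induction d with
    | zero =>
        intro q hq hd x hx
        have : q = n := by omega
        subst this
        rw [atomPos_last] at hx
        have hx2 : x = g := Finset.mem_singleton.1 (Finsupp.support_single_subset hx)
        rw [hx2, hg]
    | succ d ih =>
        intro q hq hd x hx
        have hq' : q < n := by omega
        rw [K.atomPos_step g hq'] at hx
        exact K.dim_mem_bdp (fun b hb => ih (q+1) (by omega) (by omega) b hb) hx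
  intro q hq; exact main (n - q) q hq rfl

theorem atomPos_nonneg (g : K.B) (n q : ℕ) (x : K.B) : 0 ≤ K.atomPos g n q x := by
  classical
  rcases lt_trichotomy q n with h | h | h
  · rw [K.atomPos_step g h]; exact K.bdp_nonneg _ _
  · subst h; rw [atomPos_last, Finsupp.single_apply]; split <;> omega
  · rw [atomPos, if_neg (by omega)]; simp

theorem atom_disjoint (g : K.B) {n q : ℕ} (h : q < n) (x : K.B) :
    K.atomNeg g n q x = 0 ∨ K.atomPos g n q x = 0 := by
  rw [K.atomNeg_step g h, ← K.bdp_atomNeg g h, bdm_apply, bdp_apply]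
  omega

theorem epsc_def (c : K.B →₀ ℤ) : K.epsc c = ∑ b ∈ c.support, c b * K.eps b := rfl

theorem eps_dim_zero (hU : K.Unital) {b : K.B} (h : K.dim b = 0) : K.eps b = 1 := by
  have h1 := (hU b).1
  rw [h] at h1
  simp only [Function.iterate_zero, id_eq] at h1
  rw [epsc_def] at h1
  rcases eq_or_ne (K.eps b) 0 with he | he
  · rw [Finset.sum_eq_zero] at h1
    · omega
    · intro x hx
      have hx2 : x = b := Finset.mem_singleton.1 (Finsupp.support_single_subset hx)
      subst hx2; rw [he, mul_zero]
  · have hsupp : (Finsupp.single b 1 : K.B →₀ ℤ).support = {b} := Finsupp.support_single_ne_zero _ one_ne_zero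
    rw [hsupp, Finset.sum_singleton, Finsupp.single_eq_same, one_mul] at h1
    exact h1

theorem epsc_count (hU : K.Unital) {c : K.B →₀ ℤ} (h0 : ∀ b ∈ c.support, K.dim b = 0) :
    K.epsc c = ∑ b ∈ c.support, c b := by
  rw [epsc_def]
  exact Finset.sum_congr rfl fun b hb => by rw [K.eps_dim_zero hU (h0 b hb), mul_one]

/-- A nonnegative 0-dimensional chain with augmentation 1 is a single basis element. -/
theorem eps_one_singleton (hU : K.Unital) {c : K.B →₀ ℤ} (hnn : ∀ x, 0 ≤ c x)
    (h0 : ∀ b ∈ c.support, K.dim b = 0) (h1 : K.epsc c = 1) :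
    ∃ b0, c = Finsupp.single b0 1 := by
  rw [K.epsc_count hU h0] at h1
  have hne : c.support.Nonempty := by
    by_contra h
    rw [Finset.not_nonempty_iff_eq_empty] at h
    rw [h, Finset.sum_empty] at h1; omega
  obtain ⟨b0, hb0⟩ := hne
  have hone : ∀ b ∈ c.support, 1 ≤ c b := fun b hb => by
    have := Finsupp.mem_support_iff.1 hb; have := hnn b; omega
  refine ⟨b0, ?_⟩
  classical
  have hcard : ∀ b ∈ c.support, b = b0 := by
    intro b hb
    by_contra hne
    have hb0' : b0 ∈ c.support.erase b := Finset.mem_erase.2 ⟨fun h => hne h.symm, hb0⟩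
    have e1 : ∑ x ∈ c.support, c x = c b + ∑ x ∈ c.support.erase b, c x :=
      (Finset.add_sum_erase _ _ hb).symm
    have e2 : c b0 ≤ ∑ x ∈ c.support.erase b, c x :=
      Finset.single_le_sum (fun x _ => hnn x) hb0'
    have := hone b hb
    have := hone b0 hb0
    omega
  ext x
  rcases eq_or_ne x b0 with rfl | hne
  · rw [Finsupp.single_eq_same]
    have hsub : c.support = {x} := Finset.eq_singleton_iff_unique_mem.2 ⟨hb0, hcard⟩
    rw [hsub, Finset.sum_singleton] at h1
    exact h1
  · rw [Finsupp.single_apply, if_neg (fun h => hne h.symm)]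
    by_contra h
    exact hne (hcard x (Finsupp.mem_support_iff.2 h))

theorem bdm_single_ne_zero (hU : K.Unital) {b : K.B} (h : 0 < K.dim b) :
    K.bdm (Finsupp.single b 1) ≠ 0 := by
  intro hz
  have h1 := (hU b).1
  obtain ⟨q, hq⟩ : ∃ q, K.dim b = q + 1 := ⟨K.dim b - 1, by omega⟩
  rw [hq, Function.iterate_succ_apply, hz] at h1
  have hz2 : ∀ k, K.bdm^[k] (0 : K.B →₀ ℤ) = 0 := by
    intro k
    induction k with
    | zero => rfl
    | succ k ih => rw [Function.iterate_succ_apply, K.bdm_zero, ih]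
  rw [hz2] at h1
  rw [epsc_def] at h1
  simp at h1


theorem gch_apply (xq c : K.B →₀ ℤ) (x : K.B) :
    K.gch xq c x = xq x + ∑ b ∈ c.support, c b * K.bdp (Finsupp.single b 1) x := by
  rw [gch, Finsupp.add_apply, Finsupp.sum_apply]
  simp [Finsupp.sum, Finsupp.smul_apply, smul_eq_mul]

theorem balance_apply (g : K.B) {n q : ℕ} (h : q < n) (x : K.B) :
    K.atomNeg g n q x + ∑ w ∈ (K.atomNeg g n (q+1)).support,
        K.atomNeg g n (q+1) w * K.bdp (Finsupp.single w 1) x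
    = K.atomPos g n q x + ∑ w ∈ (K.atomNeg g n (q+1)).support,
        K.atomNeg g n (q+1) w * K.bdm (Finsupp.single w 1) x := by
  have h1 := congrArg (fun c : K.B →₀ ℤ => c x) (K.bdc_atomNeg g h)
  simp only [Finsupp.sub_apply] at h1
  rw [bdc_apply] at h1
  have h2 : ∀ w ∈ (K.atomNeg g n (q+1)).support,
      K.atomNeg g n (q+1) w * K.bd w x
      = K.atomNeg g n (q+1) w * K.bdp (Finsupp.single w 1) x
        - K.atomNeg g n (q+1) w * K.bdm (Finsupp.single w 1) x := by
    intro w _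
    have h3 := congrArg (fun c : K.B →₀ ℤ => c x) (K.bdp_sub_bdm (Finsupp.single w 1))
    simp only [Finsupp.sub_apply] at h3
    rw [bdc_single] at h3
    rw [← h3]; ring
  rw [Finset.sum_congr rfl h2, Finset.sum_sub_distrib] at h1
  omega


theorem mem_supp_bd_of_bdm {a x : K.B} (h : x ∈ (K.bdm (Finsupp.single a 1)).support) :
    x ∈ (K.bd a).support := by
  rw [mem_support_bdm, bdc_single] at h
  rw [Finsupp.mem_support_iff]
  omega

theorem mem_supp_bd_of_bdp {a x : K.B} (h : x ∈ (K.bdp (Finsupp.single a 1)).support) :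
    x ∈ (K.bd a).support := by
  rw [mem_support_bdp, bdc_single] at h
  rw [Finsupp.mem_support_iff]
  omega

theorem bd_of_dim_zero {b : K.B} (h : K.dim b = 0) : K.bd b = 0 := by
  ext x
  by_contra hx
  have := K.bd_dim b x (Finsupp.mem_support_iff.2 (by
    intro h2
    exact hx (by rw [h2]; rfl)))
  omega

end FADC

/-- Membership in `νK`: the double sequence `(x_0^-, x_0^+ | x_1^-, x_1^+ | …)`,
given by `xm` and `xp`, is a member of `νK`. -/
structure NuMem (K : FADC) (xm xp : ℕ → (K.B →₀ ℤ)) : Prop where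
  dim_m : ∀ q, ∀ b ∈ (xm q).support, K.dim b = q
  dim_p : ∀ q, ∀ b ∈ (xp q).support, K.dim b = q
  nonneg_m : ∀ q b, 0 ≤ xm q b
  nonneg_p : ∀ q b, 0 ≤ xp q b
  fin : ∃ n, ∀ q, n < q → xm q = 0 ∧ xp q = 0
  eps_m : K.epsc (xm 0) = 1
  eps_p : K.epsc (xp 0) = 1
  bd_m : ∀ q, K.bdc (xm (q + 1)) = xp q - xm q
  bd_p : ∀ q, K.bdc (xp (q + 1)) = xp q - xm q

/-- `K` together with the class `thin` of thin basis elements is an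
`n`-dimensional opetopic directed complex. -/
structure IsODC (K : FADC) (thin : K.B → Prop) (n : ℕ) : Prop where
  atomic : K.Atomic n
  loopFree : K.LoopFree
  unital : K.Unital
  thin_pos : ∀ b, thin b → 0 < K.dim b
  bdp_basis : ∀ b : K.B, 0 < K.dim b →
    ∃ a : K.B, ¬ thin a ∧ K.bdp (Finsupp.single b 1) = Finsupp.single a 1
  bdm_thin : ∀ b : K.B, thin b →
    ∃ a : K.B, ¬ thin a ∧ K.bdm (Finsupp.single b 1) = Finsupp.single a 1

/-- An opetopic directed complex is reduced if every thin basis element is `∂⁻a`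
for some other basis element `a`. -/
def ODCReduced (K : FADC) (thin : K.B → Prop) : Prop :=
  ∀ b, thin b → ∃ a, a ≠ b ∧ K.bdm (Finsupp.single a 1) = Finsupp.single b 1

/-- A network: finite sets of edges and vertices with partially defined source and
target functions; input edges are those with no source, output edges those with no
target. -/
structure Network where
  E : Type
  V : Type
  finE : Finite E
  finV : Finite V
  src : E → Option V
  tgt : E → Option V

namespace Network

variable (N : Network)

/-- One step of a path: the target of `e` is the source of `e'`. -/
def step (e e' : N.E) : Prop := ∃ v : N.V, N.tgt e = some v ∧ N.src e' = some v

/-- There is a path from `e` to `e'`. -/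
def PathTo (e e' : N.E) : Prop := Relation.ReflTransGen N.step e e'

/-- A network is acyclic if there is no nontrivial path from an edge to itself. -/
def Acyclic : Prop := ∀ e : N.E, ¬ Relation.TransGen N.step e e

/-- A network is linear if it is acyclic and consists of a single path
`e_0, v_1, e_1, …, v_k, e_k`. -/
def Linear : Prop := N.Acyclic ∧
  ∃ (k : ℕ) (e : Fin (k + 1) ≃ N.E) (v : Fin k ≃ N.V),
    N.src (e 0) = none ∧ N.tgt (e (Fin.last k)) = none ∧
    ∀ i : Fin k, N.tgt (e i.castSucc) = some (v i) ∧ N.src (e i.succ) = some (v i)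

/-- A network is confluent if it is acyclic, has a unique output edge, and every
vertex is the source of exactly one edge and the target of at least one edge. -/
def Confluent : Prop := N.Acyclic ∧ (∃! e : N.E, N.tgt e = none) ∧
  (∀ v : N.V, ∃! e : N.E, N.src e = some v) ∧ (∀ v : N.V, ∃ e : N.E, N.tgt e = some v)

end Network

/-- An opetopic network: an acyclic network with a unique output edge, together with
thin edges (which are inputs) and thin vertices (each the target of exactly one edge,
which is not thin). -/
structure OpetopicNetwork extends Network where
  thinE : E → Prop
  thinV : V → Prop
  acyclic : toNetwork.Acyclic
  out_unique : ∃! e : E, tgt e = none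
  thinE_input : ∀ e, thinE e → src e = none
  thinV_unique : ∀ v, thinV v → ∃! e, tgt e = some v
  thinV_nonthin : ∀ v e, thinV v → tgt e = some v → ¬ thinE e

/-- An opetopic network is reduced if every thin edge has a target vertex which is
the target of no other edge. -/
def OpetopicNetwork.Reduced (N : OpetopicNetwork) : Prop :=
  ∀ e, N.thinE e → ∃ v, N.tgt e = some v ∧ ∀ e', N.tgt e' = some v → e' = e

/-- `c` is a constellation from `N` to `P`: a bijection from the vertices of `N` to
the input edges of `P`, preserving thinness, such that for every edge `e` of `P`
there is exactly one edge of `N` with a source but not a target in the preimage of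
`I_e` (the input edges of `P` from which there is a path to `e`). -/
def IsConstellation (N P : OpetopicNetwork) (c : N.V → P.E) : Prop :=
  (∀ v, P.src (c v) = none) ∧
  Function.Injective c ∧
  (∀ e : P.E, P.src e = none → ∃ v, c v = e) ∧
  (∀ v, N.thinV v ↔ P.thinE (c v)) ∧
  (∀ e : P.E, ∃! e' : N.E,
    (∃ v, N.src e' = some v ∧ P.toNetwork.PathTo (c v) e) ∧
    ¬ (∃ v, N.tgt e' = some v ∧ P.toNetwork.PathTo (c v) e))

/-- An `n`-dimensional opetopic sequence `N_0 → N_1 → … → N_n`. -/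
structure OpetopicSequence (n : ℕ) where
  N : Fin (n + 1) → OpetopicNetwork
  c : ∀ q : Fin n, (N q.castSucc).V → (N q.succ).E
  constell : ∀ q : Fin n, IsConstellation (N q.castSucc) (N q.succ) (c q)
  linear0 : (N 0).toNetwork.Linear
  noThin0 : ∀ e, ¬ (N 0).thinE e
  top_single : ∃! _e : (N (Fin.last n)).E, True
  top_noV : IsEmpty (N (Fin.last n)).V

/-- An isomorphism of opetopic sequences: families of bijections on edges and
vertices preserving sources, targets, thin edges and thin vertices, and commuting
with the constellations. -/
def SeqIso (n : ℕ) (S S' : OpetopicSequence n) : Prop :=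
  ∃ (fE : ∀ q : Fin (n + 1), (S.N q).E ≃ (S'.N q).E)
    (fV : ∀ q : Fin (n + 1), (S.N q).V ≃ (S'.N q).V),
    (∀ q : Fin (n + 1),
      (∀ e v, (S.N q).src e = some v ↔ (S'.N q).src (fE q e) = some (fV q v)) ∧
      (∀ e v, (S.N q).tgt e = some v ↔ (S'.N q).tgt (fE q e) = some (fV q v)) ∧
      (∀ e, (S.N q).thinE e ↔ (S'.N q).thinE (fE q e)) ∧
      (∀ v, (S.N q).thinV v ↔ (S'.N q).thinV (fV q v))) ∧
    (∀ q : Fin n, ∀ v, fE q.succ (S.c q v) = S'.c q (fV q.castSucc v))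

/-- The opetopic sequence `S` realizes the sequence
`G_0^-(⟨K⟩) → … → G_n^-(⟨K⟩)` associated to the opetopic directed complex `K`
(with top basis element `g` and thin elements `thin`): the edges of `S.N q`
correspond bijectively to the terms of `g_q^-(⟨K⟩)`, the vertices to the terms of
`⟨K⟩_{q+1}^-`, sources, targets and thinness are as prescribed by `∂⁺`, `∂⁻` and
`thin`, and the constellations are the identity correspondences. -/
def RealizedBy (K : FADC) (thin : K.B → Prop) (n : ℕ) (g : K.B)
    (S : OpetopicSequence n) : Prop :=
  ∃ (eE : ∀ q : Fin (n + 1), (S.N q).E → K.B)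
    (eV : ∀ q : Fin (n + 1), (S.N q).V → K.B),
    (∀ q : Fin (n + 1),
      Function.Injective (eE q) ∧
      (∀ ed, eE q ed ∈ (K.gch (K.atomNeg g n q.1) (K.atomNeg g n (q.1 + 1))).support) ∧
      (∀ b ∈ (K.gch (K.atomNeg g n q.1) (K.atomNeg g n (q.1 + 1))).support,
        ∃ ed, eE q ed = b) ∧
      Function.Injective (eV q) ∧
      (∀ v, eV q v ∈ (K.atomNeg g n (q.1 + 1)).support) ∧
      (∀ b ∈ (K.atomNeg g n (q.1 + 1)).support, ∃ v, eV q v = b) ∧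
      (∀ ed v, (S.N q).src ed = some v ↔
        eE q ed ∈ (K.bdp (Finsupp.single (eV q v) 1)).support) ∧
      (∀ ed v, (S.N q).tgt ed = some v ↔
        eE q ed ∈ (K.bdm (Finsupp.single (eV q v) 1)).support) ∧
      (∀ ed, (S.N q).thinE ed ↔ thin (eE q ed)) ∧
      (∀ v, (S.N q).thinV v ↔ thin (eV q v))) ∧
    (∀ q : Fin n, ∀ v, eE q.succ (S.c q v) = eV q.castSucc v)

/-- A bundled `n`-dimensional opetopic directed complex. -/
structure ODCBundle (n : ℕ) where
  K : FADC
  thin : K.B → Prop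
  g : K.B
  dim_g : K.dim g = n
  isODC : IsODC K thin n

/-- Isomorphism of (bundled) opetopic directed complexes: a dimension- and
thinness-preserving bijection of bases commuting with boundaries and augmentations. -/
def ODCIso {n : ℕ} (A A' : ODCBundle n) : Prop :=
  ∃ φ : A.K.B ≃ A'.K.B,
    (∀ b, A'.K.dim (φ b) = A.K.dim b) ∧
    (∀ b, A'.thin (φ b) ↔ A.thin b) ∧
    (∀ b, A'.K.bd (φ b) = Finsupp.equivMapDomain φ (A.K.bd b)) ∧
    (∀ b, A'.K.eps (φ b) = A.K.eps b)


-- ######## context infrastructure ########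

theorem int_one_le_mul {a b : ℤ} (ha : 1 ≤ a) (hb : 1 ≤ b) : 1 ≤ a * b := by
  have h := mul_le_mul_of_nonneg_left hb (show (0:ℤ) ≤ a by omega)
  rw [mul_one] at h
  linarith

theorem int_pos_of_mul {a b : ℤ} (h : 0 < a * b) (ha : 0 ≤ a) : 0 < b := by
  by_contra hb
  push_neg at hb
  have h2 := mul_le_mul_of_nonneg_left hb ha
  rw [mul_zero] at h2
  linarith

theorem int_mul_le_neg_one {a b : ℤ} (ha : 1 ≤ a) (hb : b ≤ -1) : a * b ≤ -1 := by
  have h2 := mul_le_mul_of_nonpos_right ha (show b ≤ 0 by omega)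
  rw [one_mul] at h2
  linarith



theorem wf_of_acyclic {α : Type} (hfin : Finite α) {r : α → α → Prop}
    (h : ∀ a, ¬ Relation.TransGen r a a) : WellFounded r := by
  have h1 : IsTrans α (Relation.TransGen r) := ⟨fun a b c => Relation.TransGen.trans⟩
  have h2 : IsIrrefl α (Relation.TransGen r) := ⟨h⟩
  exact Subrelation.wf (fun {a b} hr => Relation.TransGen.single hr)
    (Finite.wellFounded_of_trans_of_irrefl _)

/-- All the data of a realized opetopic directed complex. -/
structure Ctx (n : ℕ) where
  K : FADC
  thin : K.B → Prop
  g : K.B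
  hg : K.dim g = n
  hODC : IsODC K thin n
  S : OpetopicSequence n
  eE : ∀ q : Fin (n+1), (S.N q).E → K.B
  eV : ∀ q : Fin (n+1), (S.N q).V → K.B
  injE : ∀ q, Function.Injective (eE q)
  memE : ∀ q ed, eE q ed ∈ (K.gch (K.atomNeg g n q.1) (K.atomNeg g n (q.1+1))).support
  surjE : ∀ q, ∀ b ∈ (K.gch (K.atomNeg g n q.1) (K.atomNeg g n (q.1+1))).support, ∃ ed, eE q ed = b
  injV : ∀ q, Function.Injective (eV q)
  memV : ∀ q v, eV q v ∈ (K.atomNeg g n (q.1+1)).support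
  surjV : ∀ q, ∀ b ∈ (K.atomNeg g n (q.1+1)).support, ∃ v, eV q v = b
  srcIff : ∀ q ed v, (S.N q).src ed = some v ↔ eE q ed ∈ (K.bdp (Finsupp.single (eV q v) 1)).support
  tgtIff : ∀ q ed v, (S.N q).tgt ed = some v ↔ eE q ed ∈ (K.bdm (Finsupp.single (eV q v) 1)).support
  thinEIff : ∀ q ed, (S.N q).thinE ed ↔ thin (eE q ed)
  thinVIff : ∀ q v, (S.N q).thinV v ↔ thin (eV q v)
  constEq : ∀ q : Fin n, ∀ v, eE q.succ (S.c q v) = eV q.castSucc v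

namespace Ctx

variable {n : ℕ} (C : Ctx n)

noncomputable def xm (q : ℕ) : C.K.B →₀ ℤ := C.K.atomNeg C.g n q
noncomputable def xp (q : ℕ) : C.K.B →₀ ℤ := C.K.atomPos C.g n q
noncomputable def Gq (q : ℕ) : C.K.B →₀ ℤ := C.K.gch (C.xm q) (C.xm (q+1))

theorem memE' (q : Fin (n+1)) (ed : (C.S.N q).E) : C.eE q ed ∈ (C.Gq q.1).support :=
  C.memE q ed

theorem surjE' (q : Fin (n+1)) : ∀ b ∈ (C.Gq q.1).support, ∃ ed, C.eE q ed = b :=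
  C.surjE q

theorem memV' (q : Fin (n+1)) (v : (C.S.N q).V) : C.eV q v ∈ (C.xm (q.1+1)).support :=
  C.memV q v

theorem xm_dim {q : ℕ} (hq : q ≤ n) : ∀ x ∈ (C.xm q).support, C.K.dim x = q :=
  C.K.atomNeg_dim C.g C.hg q hq

theorem xp_dim {q : ℕ} (hq : q ≤ n) : ∀ x ∈ (C.xp q).support, C.K.dim x = q :=
  C.K.atomPos_dim C.g C.hg q hq

theorem xm_nonneg (q : ℕ) (x : C.K.B) : 0 ≤ C.xm q x := C.K.atomNeg_nonneg C.g n q x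
theorem xp_nonneg (q : ℕ) (x : C.K.B) : 0 ≤ C.xp q x := C.K.atomPos_nonneg C.g n q x

theorem dimV (q : Fin (n+1)) (v : (C.S.N q).V) : C.K.dim (C.eV q v) = q.1 + 1 := by
  have h := C.memV' q v
  rcases le_or_gt (q.1 + 1) n with hn | hn
  · exact C.xm_dim hn _ h
  · rw [xm, C.K.atomNeg_gt C.g hn] at h
    simp at h

theorem dimV_pos (q : Fin (n+1)) (v : (C.S.N q).V) : 0 < C.K.dim (C.eV q v) := by
  rw [C.dimV q v]; omega

theorem vLevel (q : Fin (n+1)) (v : (C.S.N q).V) : q.1 + 1 ≤ n := by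
  have h := C.memV' q v
  rcases le_or_gt (q.1 + 1) n with hn | hn
  · exact hn
  · rw [xm, C.K.atomNeg_gt C.g hn] at h
    simp at h

/-- `∂⁺b` is `{a}` with coefficient one; its value anywhere is 0 or 1,
and 1 exactly on its support. -/
theorem bdp_single_val {b : C.K.B} (hb : 0 < C.K.dim b) {x : C.K.B}
    (hx : x ∈ (C.K.bdp (Finsupp.single b 1)).support) :
    C.K.bdp (Finsupp.single b 1) x = 1 := by
  classical
  obtain ⟨a, -, ha⟩ := C.hODC.bdp_basis b hb
  rw [ha] at hx ⊢
  have := Finset.mem_singleton.1 (Finsupp.support_single_subset hx)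
  rw [this, Finsupp.single_eq_same]

theorem bdp_single_le {b : C.K.B} (hb : 0 < C.K.dim b) (x : C.K.B) :
    C.K.bdp (Finsupp.single b 1) x ≤ 1 := by
  classical
  obtain ⟨a, -, ha⟩ := C.hODC.bdp_basis b hb
  rw [ha, Finsupp.single_apply]
  split <;> omega

theorem dimE (q : Fin (n+1)) (ed : (C.S.N q).E) : C.K.dim (C.eE q ed) = q.1 := by
  have h := C.memE' q ed
  rw [Finsupp.mem_support_iff, Gq, FADC.gch_apply] at h
  rcases eq_or_ne (C.xm q.1 (C.eE q ed)) 0 with h1 | h1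
  · rw [h1, zero_add] at h
    obtain ⟨w, hw, hterm⟩ : ∃ w ∈ (C.xm (q.1+1)).support,
        C.xm (q.1+1) w * C.K.bdp (Finsupp.single w 1) (C.eE q ed) ≠ 0 := by
      by_contra hall
      push_neg at hall
      exact h (Finset.sum_eq_zero hall)
    obtain ⟨v, rfl⟩ := C.surjV q _ hw
    have h2 : C.eE q ed ∈ (C.K.bdp (Finsupp.single (C.eV q v) 1)).support := by
      rw [Finsupp.mem_support_iff]
      intro h3
      exact hterm (by rw [h3, mul_zero])
    have h4 : ∀ b ∈ (Finsupp.single (C.eV q v) 1 : C.K.B →₀ ℤ).support,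
        C.K.dim b = q.1 + 1 := by
      intro b hb
      have := Finset.mem_singleton.1 (Finsupp.support_single_subset hb)
      rw [this]
      exact C.dimV q v
    exact C.K.dim_mem_bdp h4 h2
  · exact C.xm_dim (by omega) _ (Finsupp.mem_support_iff.2 h1)

/-- evaluation of the `∂⁺` sum at an edge. -/
theorem sum_bdp_eval (q : Fin (n+1)) (ed : (C.S.N q).E) :
    ∑ w ∈ (C.xm (q.1+1)).support, C.xm (q.1+1) w * C.K.bdp (Finsupp.single w 1) (C.eE q ed)
    = match (C.S.N q).src ed with
      | Option.some v => C.xm (q.1+1) (C.eV q v)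
      | Option.none => 0 := by
  cases h : (C.S.N q).src ed with
  | none =>
      apply Finset.sum_eq_zero
      intro w hw
      obtain ⟨v, rfl⟩ := C.surjV q _ hw
      rcases eq_or_ne (C.K.bdp (Finsupp.single (C.eV q v) 1) (C.eE q ed)) 0 with h2 | h2
      · rw [h2, mul_zero]
      · have := (C.srcIff q ed v).2 (Finsupp.mem_support_iff.2 h2)
        rw [h] at this
        exact absurd this (by simp)
  | some v =>
      have hmem := (C.srcIff q ed v).1 h
      have hside : ∀ w ∈ (C.xm (q.1+1)).support, w ≠ C.eV q v →
          C.xm (q.1+1) w * C.K.bdp (Finsupp.single w 1) (C.eE q ed) = 0 := by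
        intro w hw hne
        obtain ⟨v', rfl⟩ := C.surjV q _ hw
        rcases eq_or_ne (C.K.bdp (Finsupp.single (C.eV q v') 1) (C.eE q ed)) 0 with h2 | h2
        · rw [h2, mul_zero]
        · have h3 := (C.srcIff q ed v').2 (Finsupp.mem_support_iff.2 h2)
          rw [h] at h3
          have h4 : v = v' := by injection h3
          exact absurd rfl (by rw [h4] at hne; exact hne)
      rw [Finset.sum_eq_single_of_mem (C.eV q v) (C.memV' q v) hside,
        C.bdp_single_val (C.dimV_pos q v) hmem, mul_one]

/-- evaluation of the `∂⁻` sum at an edge. -/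
theorem sum_bdm_eval (q : Fin (n+1)) (ed : (C.S.N q).E) :
    ∑ w ∈ (C.xm (q.1+1)).support, C.xm (q.1+1) w * C.K.bdm (Finsupp.single w 1) (C.eE q ed)
    = match (C.S.N q).tgt ed with
      | Option.some v => C.xm (q.1+1) (C.eV q v) * C.K.bdm (Finsupp.single (C.eV q v) 1) (C.eE q ed)
      | Option.none => 0 := by
  cases h : (C.S.N q).tgt ed with
  | none =>
      apply Finset.sum_eq_zero
      intro w hw
      obtain ⟨v, rfl⟩ := C.surjV q _ hw
      rcases eq_or_ne (C.K.bdm (Finsupp.single (C.eV q v) 1) (C.eE q ed)) 0 with h2 | h2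
      · rw [h2, mul_zero]
      · have := (C.tgtIff q ed v).2 (Finsupp.mem_support_iff.2 h2)
        rw [h] at this
        exact absurd this (by simp)
  | some v =>
      have hside : ∀ w ∈ (C.xm (q.1+1)).support, w ≠ C.eV q v →
          C.xm (q.1+1) w * C.K.bdm (Finsupp.single w 1) (C.eE q ed) = 0 := by
        intro w hw hne
        obtain ⟨v', rfl⟩ := C.surjV q _ hw
        rcases eq_or_ne (C.K.bdm (Finsupp.single (C.eV q v') 1) (C.eE q ed)) 0 with h2 | h2
        · rw [h2, mul_zero]
        · have h3 := (C.tgtIff q ed v').2 (Finsupp.mem_support_iff.2 h2)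
          rw [h] at h3
          have h4 : v = v' := by injection h3
          exact absurd rfl (by rw [h4] at hne; exact hne)
      rw [Finset.sum_eq_single_of_mem (C.eV q v) (C.memV' q v) hside]

/-- The coefficient equation at an edge. -/
theorem edge_eq (q : Fin (n+1)) (hq : q.1 < n) (ed : (C.S.N q).E) :
    C.xm q.1 (C.eE q ed) + (match (C.S.N q).src ed with
      | Option.some v => C.xm (q.1+1) (C.eV q v)
      | Option.none => 0)
    = C.xp q.1 (C.eE q ed) + (match (C.S.N q).tgt ed with
      | Option.some v => C.xm (q.1+1) (C.eV q v) * C.K.bdm (Finsupp.single (C.eV q v) 1) (C.eE q ed)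
      | Option.none => 0) := by
  have h := C.K.balance_apply C.g hq (C.eE q ed)
  rw [← xm, ← xm, ← xp] at h
  rw [← C.sum_bdp_eval q ed, ← C.sum_bdm_eval q ed]
  exact h

/-- `x_0^-` is a single basis element with coefficient 1. -/
theorem xm_zero_single : ∃ b0, C.xm 0 = Finsupp.single b0 1 := by
  apply C.K.eps_one_singleton C.hODC.unital (C.xm_nonneg 0) (C.xm_dim (Nat.zero_le n))
  have h := (C.hODC.unital C.g).1
  rw [C.hg] at h
  rw [xm, FADC.atomNeg, if_pos (Nat.zero_le n), Nat.sub_zero]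
  exact h

/-- basis elements occurring in `x_q^-` label input edges. -/
theorem src_none_of_mem_xm (q : Fin (n+1)) (ed : (C.S.N q).E)
    (h : C.eE q ed ∈ (C.xm q.1).support) : (C.S.N q).src ed = none := by
  rcases eq_or_ne q 0 with rfl | hq0
  · -- level 0
    obtain ⟨hacy, k, e, v, h0, hlast, hmid⟩ := C.S.linear0
    have he0 : C.eE 0 (e 0) ∈ (C.xm 0).support := by
      have hm := C.memE' 0 (e 0)
      rw [Finsupp.mem_support_iff, Gq, FADC.gch_apply] at hm
      rw [Finsupp.mem_support_iff]
      intro h1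
      rw [show ((0 : Fin (n+1)) : ℕ) = 0 from rfl, h1, zero_add] at hm
      obtain ⟨w, hw, hterm⟩ : ∃ w ∈ (C.xm (0+1)).support,
          C.xm (0+1) w * C.K.bdp (Finsupp.single w 1) (C.eE 0 (e 0)) ≠ 0 := by
        by_contra hall
        push_neg at hall
        exact hm (Finset.sum_eq_zero hall)
      obtain ⟨v', rfl⟩ := C.surjV 0 _ hw
      have h2 : C.eE 0 (e 0) ∈ (C.K.bdp (Finsupp.single (C.eV 0 v') 1)).support := by
        rw [Finsupp.mem_support_iff]
        intro h3
        exact hterm (by rw [h3, mul_zero])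
      have h4 := (C.srcIff 0 (e 0) v').2 h2
      rw [h0] at h4
      exact absurd h4 (by simp)
    obtain ⟨b0, hb0⟩ := C.xm_zero_single
    have h' : C.eE 0 ed ∈ (C.xm 0).support := h
    rw [hb0] at h' he0
    have h := h'
    have h1 : C.eE 0 ed = b0 := Finset.mem_singleton.1 (Finsupp.support_single_subset h)
    have h2 : C.eE 0 (e 0) = b0 := Finset.mem_singleton.1 (Finsupp.support_single_subset he0)
    have : ed = e 0 := C.injE 0 (h1.trans h2.symm)
    rw [this, h0]
  · -- level ≥ 1
    obtain ⟨p, rfl⟩ := Fin.exists_succ_eq.2 hq0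
    have hcs : (p.castSucc.1 + 1) = (p.succ.1 : ℕ) := by simp
    have h2 : C.eE p.succ ed ∈ (C.xm (p.castSucc.1 + 1)).support := by
      rw [hcs]; exact h
    obtain ⟨v, hv⟩ := C.surjV p.castSucc _ h2
    have h3 : C.eE p.succ (C.S.c p v) = C.eE p.succ ed := by
      rw [C.constEq p v, hv]
    have h4 : C.S.c p v = ed := C.injE p.succ h3
    rw [← h4]
    exact (C.S.constell p).1 v

theorem bdm_mem_Gq (q : Fin (n+1)) (hq : q.1 < n) (v : (C.S.N q).V) {y : C.K.B}
    (hy : y ∈ (C.K.bdm (Finsupp.single (C.eV q v) 1)).support) : y ∈ (C.Gq q.1).support := by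
  have hbal := C.K.balance_apply C.g hq y
  rw [← xm, ← xm, ← xp] at hbal
  have hGq : C.Gq q.1 y = C.xm q.1 y + ∑ w ∈ (C.xm (q.1+1)).support,
      C.xm (q.1+1) w * C.K.bdp (Finsupp.single w 1) y := C.K.gch_apply _ _ y
  have hterm : 1 ≤ C.xm (q.1+1) (C.eV q v) * C.K.bdm (Finsupp.single (C.eV q v) 1) y := by
    have h1 : 1 ≤ C.xm (q.1+1) (C.eV q v) := by
      have := Finsupp.mem_support_iff.1 (C.memV' q v)
      have := C.xm_nonneg (q.1+1) (C.eV q v)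
      omega
    have h2 : 1 ≤ C.K.bdm (Finsupp.single (C.eV q v) 1) y := by
      have := Finsupp.mem_support_iff.1 hy
      have := C.K.bdm_nonneg (Finsupp.single (C.eV q v) 1) y
      omega
    exact int_one_le_mul h1 h2
  have hsum : C.xm (q.1+1) (C.eV q v) * C.K.bdm (Finsupp.single (C.eV q v) 1) y
      ≤ ∑ w ∈ (C.xm (q.1+1)).support, C.xm (q.1+1) w * C.K.bdm (Finsupp.single w 1) y := by
    apply Finset.single_le_sum (f := fun w => C.xm (q.1+1) w * C.K.bdm (Finsupp.single w 1) y)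
      (fun w _ => mul_nonneg (C.xm_nonneg _ w) (C.K.bdm_nonneg _ y)) (C.memV' q v)
  have hxp := C.xp_nonneg q.1 y
  rw [Finsupp.mem_support_iff, hGq]
  omega

theorem exists_tgt_edge (q : Fin (n+1)) (v : (C.S.N q).V) :
    ∃ ed, (C.S.N q).tgt ed = some v := by
  have hq : q.1 < n := by have := C.vLevel q v; omega
  have hne : C.K.bdm (Finsupp.single (C.eV q v) 1) ≠ 0 :=
    C.K.bdm_single_ne_zero C.hODC.unital (C.dimV_pos q v)
  obtain ⟨y, hy⟩ := Finsupp.support_nonempty_iff.2 hne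
  obtain ⟨ed, hed⟩ := C.surjE' q y (C.bdm_mem_Gq q hq v hy)
  refine ⟨ed, (C.tgtIff q ed v).2 ?_⟩
  rw [hed]; exact hy

theorem xm_zero_of_src_some (q : Fin (n+1)) (ed : (C.S.N q).E) {v : (C.S.N q).V}
    (h : (C.S.N q).src ed = some v) : C.xm q.1 (C.eE q ed) = 0 := by
  by_contra hne
  have := C.src_none_of_mem_xm q ed (Finsupp.mem_support_iff.2 hne)
  rw [h] at this
  exact absurd this (by simp)

theorem walk (q : Fin (n+1)) (hq : q.1 < n) (hU : ∀ x, C.xm q.1 x ≤ 1) :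
    ∀ ed : (C.S.N q).E, ∀ v, (C.S.N q).tgt ed = some v → C.xm (q.1+1) (C.eV q v) ≤ 1 := by
  have hfin := (C.S.N q).finE
  have hwf : WellFounded (C.S.N q).toNetwork.step := wf_of_acyclic hfin (C.S.N q).acyclic
  have main : ∀ ed : (C.S.N q).E, Acc (C.S.N q).toNetwork.step ed →
      ∀ v, (C.S.N q).tgt ed = some v → C.xm (q.1+1) (C.eV q v) ≤ 1 := by
    intro ed hacc
    induction hacc with
    | intro ed hacc ih =>
      intro v htgt
      have he := C.edge_eq q hq ed
      have hm : 1 ≤ C.K.bdm (Finsupp.single (C.eV q v) 1) (C.eE q ed) := by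
        have h1 := Finsupp.mem_support_iff.1 ((C.tgtIff q ed v).1 htgt)
        have := C.K.bdm_nonneg (Finsupp.single (C.eV q v) 1) (C.eE q ed)
        omega
      have hc0 := C.xm_nonneg (q.1+1) (C.eV q v)
      cases hsrc : (C.S.N q).src ed with
      | none =>
          rw [hsrc, htgt] at he
          replace he : C.xm q.1 (C.eE q ed) + 0 = C.xp q.1 (C.eE q ed)
              + C.xm (q.1+1) (C.eV q v) * C.K.bdm (Finsupp.single (C.eV q v) 1) (C.eE q ed) := he
          have hxm := hU (C.eE q ed)
          have hxp := C.xp_nonneg q.1 (C.eE q ed)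
          have h5 : C.xm (q.1+1) (C.eV q v) * 1 ≤ C.xm (q.1+1) (C.eV q v)
              * C.K.bdm (Finsupp.single (C.eV q v) 1) (C.eE q ed) :=
            mul_le_mul_of_nonneg_left hm hc0
          rw [mul_one] at h5
          linarith [he, h5, hxm, hxp]
      | some v2 =>
          rw [hsrc, htgt] at he
          replace he : C.xm q.1 (C.eE q ed) + C.xm (q.1+1) (C.eV q v2) = C.xp q.1 (C.eE q ed)
              + C.xm (q.1+1) (C.eV q v) * C.K.bdm (Finsupp.single (C.eV q v) 1) (C.eE q ed) := he
          have hxm := C.xm_zero_of_src_some q ed hsrc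
          have hxp := C.xp_nonneg q.1 (C.eE q ed)
          obtain ⟨ed2, htgt2⟩ := C.exists_tgt_edge q v2
          have hstep : (C.S.N q).toNetwork.step ed2 ed := ⟨v2, htgt2, hsrc⟩
          have hc2 := ih ed2 hstep v2 htgt2
          have h5 : C.xm (q.1+1) (C.eV q v) * 1 ≤ C.xm (q.1+1) (C.eV q v)
              * C.K.bdm (Finsupp.single (C.eV q v) 1) (C.eE q ed) :=
            mul_le_mul_of_nonneg_left hm hc0
          rw [mul_one] at h5
          linarith [he, h5, hxm, hxp, hc2]
  exact fun ed => main ed (hwf.apply ed)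

theorem Uall : ∀ q ≤ n, ∀ x, C.xm q x ≤ 1 := by
  intro q
  induction q with
  | zero =>
      intro _ x
      classical
      obtain ⟨b0, hb0⟩ := C.xm_zero_single
      rw [hb0, Finsupp.single_apply]
      split <;> omega
  | succ q ih =>
      intro hq x
      have hq' : q < n := by omega
      set qf : Fin (n+1) := ⟨q, by omega⟩ with hqf
      have hU : ∀ x, C.xm (qf.1) x ≤ 1 := ih (by omega)
      rcases eq_or_ne (C.xm (q+1) x) 0 with h | h
      · omega
      · obtain ⟨v, rfl⟩ := C.surjV qf x (Finsupp.mem_support_iff.2 h)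
        obtain ⟨ed, htgt⟩ := C.exists_tgt_edge qf v
        exact C.walk qf hq' hU ed v htgt

theorem Mall (q : Fin (n+1)) (v : (C.S.N q).V) (x : C.K.B) :
    C.K.bdm (Finsupp.single (C.eV q v) 1) x ≤ 1 := by
  have hq : q.1 < n := by have := C.vLevel q v; omega
  rcases eq_or_ne (C.K.bdm (Finsupp.single (C.eV q v) 1) x) 0 with h0 | h0
  · omega
  · obtain ⟨ed, hed⟩ := C.surjE' q x (C.bdm_mem_Gq q hq v (Finsupp.mem_support_iff.2 h0))
    subst hed
    have htgt : (C.S.N q).tgt ed = some v := (C.tgtIff q ed v).2 (Finsupp.mem_support_iff.2 h0)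
    have he := C.edge_eq q hq ed
    have hc : 1 ≤ C.xm (q.1+1) (C.eV q v) := by
      have := Finsupp.mem_support_iff.1 (C.memV' q v)
      have := C.xm_nonneg (q.1+1) (C.eV q v)
      omega
    have hm0 : 0 ≤ C.K.bdm (Finsupp.single (C.eV q v) 1) (C.eE q ed) := C.K.bdm_nonneg _ _
    cases hsrc : (C.S.N q).src ed with
    | none =>
        rw [hsrc, htgt] at he
        replace he : C.xm q.1 (C.eE q ed) + 0 = C.xp q.1 (C.eE q ed)
            + C.xm (q.1+1) (C.eV q v) * C.K.bdm (Finsupp.single (C.eV q v) 1) (C.eE q ed) := he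
        have hxm := C.Uall q.1 (by omega) (C.eE q ed)
        have hxp := C.xp_nonneg q.1 (C.eE q ed)
        have hxm0 := C.xm_nonneg q.1 (C.eE q ed)
        have hdisj := C.K.atom_disjoint C.g (q := q.1) hq (C.eE q ed)
        rw [← xm, ← xp] at hdisj
        -- from he : xm + 0 = xp + c*m ; if m ≥ 1 then xm ≥ 1 so xp = 0
        have hint : 1 * C.K.bdm (Finsupp.single (C.eV q v) 1) (C.eE q ed)
            ≤ C.xm (q.1+1) (C.eV q v) * C.K.bdm (Finsupp.single (C.eV q v) 1) (C.eE q ed) :=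
          mul_le_mul_of_nonneg_right hc hm0
        rw [one_mul] at hint
        rcases hdisj with h1 | h1
        · linarith [he, hint, hxm, hxp, h1, hm0]
        · linarith [he, hint, hxm, hxp, h1, hm0]
    | some v2 =>
        rw [hsrc, htgt] at he
        replace he : C.xm q.1 (C.eE q ed) + C.xm (q.1+1) (C.eV q v2) = C.xp q.1 (C.eE q ed)
            + C.xm (q.1+1) (C.eV q v) * C.K.bdm (Finsupp.single (C.eV q v) 1) (C.eE q ed) := he
        have hxm := C.xm_zero_of_src_some q ed hsrc
        have hxp := C.xp_nonneg q.1 (C.eE q ed)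
        have hc2 := C.Uall (q.1+1) (by omega) (C.eV q v2)
        have hc20 := C.xm_nonneg (q.1+1) (C.eV q v2)
        have hint : 1 * C.K.bdm (Finsupp.single (C.eV q v) 1) (C.eE q ed)
            ≤ C.xm (q.1+1) (C.eV q v) * C.K.bdm (Finsupp.single (C.eV q v) 1) (C.eE q ed) :=
          mul_le_mul_of_nonneg_right hc hm0
        rw [one_mul] at hint
        linarith [he, hint, hxm, hxp, hc2, hc20]

/-- nat-level version of `bdm_mem_Gq`. -/
theorem mem_Gq_of_bdm {q : ℕ} (hq : q < n) {w : C.K.B} (hw : w ∈ (C.xm (q+1)).support)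
    {y : C.K.B} (hy : y ∈ (C.K.bdm (Finsupp.single w 1)).support) : y ∈ (C.Gq q).support := by
  have hbal := C.K.balance_apply C.g hq y
  rw [← xm, ← xm, ← xp] at hbal
  have hGq : C.Gq q y = C.xm q y + ∑ w' ∈ (C.xm (q+1)).support,
      C.xm (q+1) w' * C.K.bdp (Finsupp.single w' 1) y := C.K.gch_apply _ _ y
  have hterm : 1 ≤ C.xm (q+1) w * C.K.bdm (Finsupp.single w 1) y := by
    have h1 := Finsupp.mem_support_iff.1 hw
    have h2 := C.xm_nonneg (q+1) w
    have h3 := Finsupp.mem_support_iff.1 hy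
    have h4 := C.K.bdm_nonneg (Finsupp.single w 1) y
    exact int_one_le_mul (by omega) (by omega)
  have hsum : C.xm (q+1) w * C.K.bdm (Finsupp.single w 1) y
      ≤ ∑ w' ∈ (C.xm (q+1)).support, C.xm (q+1) w' * C.K.bdm (Finsupp.single w' 1) y :=
    Finset.single_le_sum (f := fun w' => C.xm (q+1) w' * C.K.bdm (Finsupp.single w' 1) y)
      (fun w' _ => mul_nonneg (C.xm_nonneg _ w') (C.K.bdm_nonneg _ y)) hw
  have hxp := C.xp_nonneg q y
  have hxmq := C.xm_nonneg q y
  rw [Finsupp.mem_support_iff, hGq]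
  omega

theorem mem_Gq_of_bdp {q : ℕ} {w : C.K.B} (hw : w ∈ (C.xm (q+1)).support)
    {y : C.K.B} (hy : y ∈ (C.K.bdp (Finsupp.single w 1)).support) : y ∈ (C.Gq q).support := by
  have hGq : C.Gq q y = C.xm q y + ∑ w' ∈ (C.xm (q+1)).support,
      C.xm (q+1) w' * C.K.bdp (Finsupp.single w' 1) y := C.K.gch_apply _ _ y
  have hterm : 1 ≤ C.xm (q+1) w * C.K.bdp (Finsupp.single w 1) y := by
    have h1 := Finsupp.mem_support_iff.1 hw
    have h2 := C.xm_nonneg (q+1) w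
    have h3 := Finsupp.mem_support_iff.1 hy
    have h4 := C.K.bdp_nonneg (Finsupp.single w 1) y
    exact int_one_le_mul (by omega) (by omega)
  have hsum : C.xm (q+1) w * C.K.bdp (Finsupp.single w 1) y
      ≤ ∑ w' ∈ (C.xm (q+1)).support, C.xm (q+1) w' * C.K.bdp (Finsupp.single w' 1) y :=
    Finset.single_le_sum (f := fun w' => C.xm (q+1) w' * C.K.bdp (Finsupp.single w' 1) y)
      (fun w' _ => mul_nonneg (C.xm_nonneg _ w') (C.K.bdp_nonneg _ y)) hw
  have hxmq := C.xm_nonneg q y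
  rw [Finsupp.mem_support_iff, hGq]
  omega

/-- The supports of the chains `g_q^-` exhaust all basis elements. -/
theorem edge_complete (lt : C.K.B → C.K.B → Prop) (hso : IsStrictOrder C.K.B lt)
    (hlf : ∀ (a : C.K.B) (r : ℕ), 0 < r →
      ∀ b ∈ (C.K.bdm^[r] (Finsupp.single a 1)).support,
        ∀ b' ∈ (C.K.bdp^[r] (Finsupp.single a 1)).support, lt b b') :
    ∀ q ≤ n, ∀ b : C.K.B, C.K.dim b = q → b ∈ (C.Gq q).support := by
  classical
  have htrans : ∀ x y z, lt x y → lt y z → lt x z := fun x y z h1 h2 =>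
    hso.toIsTrans.trans x y z h1 h2
  have hirrefl : ∀ x, ¬ lt x x := fun x => hso.toIrrefl.irrefl x
  have hlf1 : ∀ (a : C.K.B), ∀ b ∈ (C.K.bdm (Finsupp.single a 1)).support,
      ∀ b' ∈ (C.K.bdp (Finsupp.single a 1)).support, lt b b' := by
    intro a b hb b' hb'
    exact hlf a 1 (by omega) b (by rwa [Function.iterate_one]) b' (by rwa [Function.iterate_one])
  have main : ∀ d q, q + d = n → ∀ b, C.K.dim b = q → b ∈ (C.Gq q).support := by
    intro d
    induction d with
    | zero =>
        intro q hq b hb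
        have hqn : q = n := by omega
        subst hqn
        obtain ⟨gg, hgg, huniq⟩ := C.hODC.atomic.2.1
        have hbg : b = C.g := by
          have h1 := huniq b hb
          have h2 := huniq C.g C.hg
          rw [h1, h2]
        subst hbg
        rw [Finsupp.mem_support_iff, Gq, FADC.gch_apply]
        have h1 : C.xm (q+1) = 0 := C.K.atomNeg_gt C.g (by omega)
        have h2 : C.xm q C.g = 1 := by
          rw [xm, C.K.atomNeg_last, Finsupp.single_eq_same]
        rw [h1, h2]
        simp
    | succ d ih =>
        intro q hq b hb
        have hq' : q < n := by omega
        -- get a parent of b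
        obtain ⟨a, hda, hmem⟩ := C.hODC.atomic.2.2 b (by omega)
        have hdima : C.K.dim a = q + 1 := by
          rcases hmem with h | h
          · have := C.K.bd_dim a b (C.K.mem_supp_bd_of_bdm h)
            omega
          · have := C.K.bd_dim a b (C.K.mem_supp_bd_of_bdp h)
            omega
        have hA : a ∈ (C.Gq (q+1)).support := ih (q+1) (by omega) a hdima
        -- split the membership of a
        have hsplitA : a ∈ (C.xm (q+1)).support ∨
            ∃ w ∈ (C.xm (q+2)).support, a ∈ (C.K.bdp (Finsupp.single w 1)).support := by
          rw [Finsupp.mem_support_iff, Gq, FADC.gch_apply] at hA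
          rcases eq_or_ne (C.xm (q+1) a) 0 with h1 | h1
          · right
            rw [h1, zero_add] at hA
            obtain ⟨w, hw, hterm⟩ : ∃ w ∈ (C.xm (q+2)).support,
                C.xm (q+2) w * C.K.bdp (Finsupp.single w 1) a ≠ 0 := by
              by_contra hall
              push_neg at hall
              exact hA (Finset.sum_eq_zero hall)
            exact ⟨w, hw, Finsupp.mem_support_iff.2 (fun h3 => hterm (by rw [h3, mul_zero]))⟩
          · exact Or.inl (Finsupp.mem_support_iff.2 h1)
        -- the inner recursion
        set T : Finset C.K.B :=
          (C.xm (q+2)).support.biUnion (fun w => (C.K.bdm (Finsupp.single w 1)).support) with hT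
        have inner : ∀ N : ℕ, ∀ a : C.K.B, (T.filter (fun y => lt y a)).card < N →
            C.K.dim a = q + 1 →
            (a ∈ (C.xm (q+1)).support ∨
              ∃ w ∈ (C.xm (q+2)).support, a ∈ (C.K.bdp (Finsupp.single w 1)).support) →
            ∀ x, (x ∈ (C.K.bdm (Finsupp.single a 1)).support ∨
              x ∈ (C.K.bdp (Finsupp.single a 1)).support) →
            x ∈ (C.Gq q).support := by
          intro N
          induction N with
          | zero => intro a hcard; omega
          | succ N ihN =>
              intro a hcard hdA hsplit x hx
              rcases hsplit with hvert | ⟨w, hw, haw⟩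
              · rcases hx with hxm | hxp
                · exact C.mem_Gq_of_bdm hq' hvert hxm
                · exact C.mem_Gq_of_bdp hvert hxp
              · -- a is the positive boundary of w
                have hq2 : q + 2 ≤ n := by
                  by_contra hc
                  rw [xm, C.K.atomNeg_gt C.g (by omega)] at hw
                  simp at hw
                have hdw : C.K.dim w = q + 2 := C.xm_dim (by omega) w hw
                obtain ⟨t, -, ht⟩ := C.hODC.bdp_basis w (by omega)
                have hat : a = t := by
                  rw [ht] at haw
                  exact Finset.mem_singleton.1 (Finsupp.support_single_subset haw)
                subst hat
                have hsingle : (Finsupp.single a 1 : C.K.B →₀ ℤ) = C.K.bdp (Finsupp.single w 1) :=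
                  ht.symm
                -- translate hx along ∂∂ = 0
                have hx' : x ∈ (C.K.bdm (C.K.bdm (Finsupp.single w 1))).support ∨
                    x ∈ (C.K.bdp (C.K.bdm (Finsupp.single w 1))).support := by
                  rcases hx with h | h
                  · left; rwa [hsingle, C.K.bdm_bdm'] at h
                  · right; rwa [hsingle, C.K.bdp_bdp] at h
                have hmnn : ∀ z, 0 ≤ C.K.bdm (Finsupp.single w 1) z := C.K.bdm_nonneg _
                obtain ⟨bi, hbi, hxbi⟩ : ∃ bi ∈ (C.K.bdm (Finsupp.single w 1)).support,
                    (x ∈ (C.K.bdm (Finsupp.single bi 1)).support ∨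
                     x ∈ (C.K.bdp (Finsupp.single bi 1)).support) := by
                  rcases hx' with h | h
                  · obtain ⟨bi, hbi, hh⟩ := C.K.supp_bdm_biUnion hmnn h
                    exact ⟨bi, hbi, Or.inl hh⟩
                  · obtain ⟨bi, hbi, hh⟩ := C.K.supp_bdp_biUnion hmnn h
                    exact ⟨bi, hbi, Or.inr hh⟩
                have hdbi : C.K.dim bi = q + 1 := by
                  apply C.K.dim_mem_bdm (q := q + 1) _ hbi
                  intro z hz
                  have := Finset.mem_singleton.1 (Finsupp.support_single_subset hz)
                  rw [this, hdw]
                have hlt : lt bi a := hlf1 w bi hbi a haw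
                have hbiT : bi ∈ T := Finset.mem_biUnion.2 ⟨w, hw, hbi⟩
                have hcard' : (T.filter (fun y => lt y bi)).card < N := by
                  have hsub : T.filter (fun y => lt y bi) ⊆ T.filter (fun y => lt y a) := by
                    intro y hy
                    rw [Finset.mem_filter] at hy ⊢
                    exact ⟨hy.1, htrans y bi a hy.2 hlt⟩
                  have hss : T.filter (fun y => lt y bi) ⊂ T.filter (fun y => lt y a) := by
                    rw [Finset.ssubset_iff_of_subset hsub]
                    exact ⟨bi, Finset.mem_filter.2 ⟨hbiT, hlt⟩,
                      fun hmem2 => hirrefl bi (Finset.mem_filter.1 hmem2).2⟩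
                  have := Finset.card_lt_card hss
                  omega
                -- establish the disjunct for bi
                have hsplitbi : bi ∈ (C.xm (q+1)).support ∨
                    ∃ w' ∈ (C.xm (q+2)).support, bi ∈ (C.K.bdp (Finsupp.single w' 1)).support := by
                  by_cases hmem2 : bi ∈ (C.xm (q+1)).support
                  · exact Or.inl hmem2
                  · right
                    have hz : C.xm (q+1) bi = 0 := by
                      by_contra hzz
                      exact hmem2 (Finsupp.mem_support_iff.2 hzz)
                    have hbd := congrArg (fun c : C.K.B →₀ ℤ => c bi)
                      (C.K.bdc_atomNeg C.g (show q + 1 < n by omega))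
                    simp only [Finsupp.sub_apply] at hbd
                    rw [FADC.bdc_apply] at hbd
                    replace hbd : ∑ w' ∈ (C.xm (q+2)).support,
                        C.xm (q+2) w' * C.K.bd w' bi
                        = C.xp (q+1) bi - C.xm (q+1) bi := hbd
                    rw [hz, sub_zero] at hbd
                    -- sum = xp ≥ 0, but term at w is ≤ -1
                    have htermw : C.xm (q+2) w * C.K.bd w bi ≤ -1 := by
                      have h1 := Finsupp.mem_support_iff.1 hw
                      have h2 := C.xm_nonneg (q+2) w
                      have h3 : C.K.bd w bi < 0 := by
                        have := (C.K.mem_support_bdm (c := Finsupp.single w 1) (x := bi)).1 hbi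
                        rwa [FADC.bdc_single] at this
                      exact int_mul_le_neg_one (by omega) (by omega)
                    obtain ⟨w', hw', hpos⟩ : ∃ w' ∈ (C.xm (q+2)).support,
                        0 < C.xm (q+2) w' * C.K.bd w' bi := by
                      by_contra hall
                      push_neg at hall
                      have hsum1 : ∑ w' ∈ (C.xm (q+2)).support, C.xm (q+2) w' * C.K.bd w' bi
                          = C.xm (q+2) w * C.K.bd w bi
                            + ∑ w' ∈ (C.xm (q+2)).support.erase w,
                                C.xm (q+2) w' * C.K.bd w' bi :=
                        (Finset.add_sum_erase _ _ hw).symm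
                      have hsum2 : ∑ w' ∈ (C.xm (q+2)).support.erase w,
                          C.xm (q+2) w' * C.K.bd w' bi ≤ 0 :=
                        Finset.sum_nonpos (fun w' hw' => hall w' (Finset.mem_erase.1 hw').2)
                      have hxp2 := C.xp_nonneg (q+1) bi
                      omega
                    refine ⟨w', hw', ?_⟩
                    rw [FADC.mem_support_bdp, FADC.bdc_single]
                    exact int_pos_of_mul hpos (C.xm_nonneg (q+2) w')
                exact ihN bi hcard' hdbi hsplitbi x hxbi
        exact inner ((T.filter (fun y => lt y b)).card + 1 + (T.filter (fun y => lt y a)).card)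
          a (by omega) hdima hsplitA b hmem
  intro q hq b hb
  exact main (n - q) q (by omega) b hb

theorem sigma_inj : Function.Injective
    (fun p : Σ q : Fin (n+1), (C.S.N q).E => C.eE p.fst p.snd) := by
  rintro ⟨q1, e1⟩ ⟨q2, e2⟩ h
  simp only at h
  have hq : q1 = q2 := Fin.ext (by rw [← C.dimE q1 e1, ← C.dimE q2 e2, h])
  subst hq
  have := C.injE q1 h
  subst this
  rfl

theorem exists_edge (b : C.K.B) :
    ∃ p : Σ q : Fin (n+1), (C.S.N q).E, C.eE p.fst p.snd = b := by
  obtain ⟨lt, hso, hlf⟩ := C.hODC.loopFree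
  have hd : C.K.dim b ≤ n := C.hODC.atomic.1 b
  have hmem : b ∈ (C.Gq (C.K.dim b)).support := C.edge_complete lt hso hlf (C.K.dim b) hd b rfl
  obtain ⟨ed, hed⟩ := C.surjE' ⟨C.K.dim b, by omega⟩ b hmem
  exact ⟨⟨⟨C.K.dim b, by omega⟩, ed⟩, hed⟩

noncomputable def basisEquiv : (Σ q : Fin (n+1), (C.S.N q).E) ≃ C.K.B :=
  Equiv.ofBijective (fun p => C.eE p.fst p.snd) ⟨C.sigma_inj, fun b => C.exists_edge b⟩

theorem basisEquiv_apply (q : Fin (n+1)) (ed : (C.S.N q).E) :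
    C.basisEquiv ⟨q, ed⟩ = C.eE q ed := rfl

theorem bFinite : Finite C.K.B := by
  have h1 : ∀ q : Fin (n+1), Finite (C.S.N q).E := fun q => (C.S.N q).finE
  exact Finite.of_surjective (fun p : Σ q : Fin (n+1), (C.S.N q).E => C.eE p.fst p.snd)
    (fun b => C.exists_edge b)

theorem Gq_split {q : ℕ} {b : C.K.B} (h : b ∈ (C.Gq q).support) :
    b ∈ (C.xm q).support ∨
      ∃ w ∈ (C.xm (q+1)).support, b ∈ (C.K.bdp (Finsupp.single w 1)).support := by
  rw [Finsupp.mem_support_iff, Gq, FADC.gch_apply] at h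
  rcases eq_or_ne (C.xm q b) 0 with h1 | h1
  · right
    rw [h1, zero_add] at h
    obtain ⟨w, hw, hterm⟩ : ∃ w ∈ (C.xm (q+1)).support,
        C.xm (q+1) w * C.K.bdp (Finsupp.single w 1) b ≠ 0 := by
      by_contra hall
      push_neg at hall
      exact h (Finset.sum_eq_zero hall)
    exact ⟨w, hw, Finsupp.mem_support_iff.2 (fun h3 => hterm (by rw [h3, mul_zero]))⟩
  · exact Or.inl (Finsupp.mem_support_iff.2 h1)

end Ctx

/-- Theorem 5.3 (uniqueness part): if the opetopic sequences associated to two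
`n`-dimensional opetopic directed complexes `K` and `K'` are isomorphic, then `K`
and `K'` are isomorphic as opetopic directed complexes. -/
theorem stmt16 (n : ℕ) (K K' : FADC) (thin : K.B → Prop) (thin' : K'.B → Prop)
    (hK : IsODC K thin n) (hK' : IsODC K' thin' n)
    (g : K.B) (hg : K.dim g = n) (g' : K'.B) (hg' : K'.dim g' = n)
    (S S' : OpetopicSequence n)
    (hS : RealizedBy K thin n g S) (hS' : RealizedBy K' thin' n g' S')
    (hiso : SeqIso n S S') :
    ∃ φ : K.B ≃ K'.B,
      (∀ b, K'.dim (φ b) = K.dim b) ∧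
      (∀ b, thin' (φ b) ↔ thin b) ∧
      (∀ b, K'.bd (φ b) = Finsupp.equivMapDomain φ (K.bd b)) ∧
      (∀ b, K'.eps (φ b) = K.eps b) := by
  classical
  obtain ⟨eE, eV, hprops, hconst⟩ := hS
  obtain ⟨eE', eV', hprops', hconst'⟩ := hS'
  obtain ⟨fE, fV, hiso1, hisoc⟩ := hiso
  let C : Ctx n := ⟨K, thin, g, hg, hK, S, eE, eV,
    fun q => (hprops q).1, fun q => (hprops q).2.1, fun q => (hprops q).2.2.1,
    fun q => (hprops q).2.2.2.1, fun q => (hprops q).2.2.2.2.1,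
    fun q => (hprops q).2.2.2.2.2.1, fun q => (hprops q).2.2.2.2.2.2.1,
    fun q => (hprops q).2.2.2.2.2.2.2.1, fun q => (hprops q).2.2.2.2.2.2.2.2.1,
    fun q => (hprops q).2.2.2.2.2.2.2.2.2, hconst⟩
  let C' : Ctx n := ⟨K', thin', g', hg', hK', S', eE', eV',
    fun q => (hprops' q).1, fun q => (hprops' q).2.1, fun q => (hprops' q).2.2.1,
    fun q => (hprops' q).2.2.2.1, fun q => (hprops' q).2.2.2.2.1,
    fun q => (hprops' q).2.2.2.2.2.1, fun q => (hprops' q).2.2.2.2.2.2.1,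
    fun q => (hprops' q).2.2.2.2.2.2.2.1, fun q => (hprops' q).2.2.2.2.2.2.2.2.1,
    fun q => (hprops' q).2.2.2.2.2.2.2.2.2, hconst'⟩
  -- the loop-free order on K is well-founded
  obtain ⟨lt, hso, hlf⟩ := hK.loopFree
  have htransl : Transitive lt := fun x y z h1 h2 => hso.toIsTrans.trans x y z h1 h2
  have hwflt : WellFounded lt := by
    have hfin : Finite K.B := C.bFinite
    apply wf_of_acyclic hfin
    intro a ha
    rw [(haveI := hso.toIsTrans; Relation.transGen_eq_self : Relation.TransGen lt = lt)] at ha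
    exact hso.toIrrefl.irrefl a ha
  have hlf1 : ∀ (a : K.B), ∀ bi ∈ (K.bdm (Finsupp.single a 1)).support,
      ∀ b' ∈ (K.bdp (Finsupp.single a 1)).support, lt bi b' := fun a bi hbi b' hb' =>
    hlf a 1 (by omega) bi (by rwa [Function.iterate_one]) b' (by rwa [Function.iterate_one])
  -- the bijection
  let fe : (Σ q : Fin (n+1), (S.N q).E) ≃ (Σ q : Fin (n+1), (S'.N q).E) :=
    Equiv.sigmaCongrRight fE
  let φ : K.B ≃ K'.B := (C.basisEquiv.symm.trans fe).trans C'.basisEquiv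
  have hφE : ∀ (q : Fin (n+1)) (ed : (S.N q).E), φ (eE q ed) = eE' q (fE q ed) := by
    intro q ed
    show C'.basisEquiv (fe (C.basisEquiv.symm (eE q ed))) = _
    have h1 : C.basisEquiv.symm (eE q ed) = ⟨q, ed⟩ := by
      rw [Equiv.symm_apply_eq]
      rfl
    rw [h1]
    rfl
  have hφV : ∀ (p : Fin (n+1)) (v : (S.N p).V), φ (eV p v) = eV' p (fV p v) := by
    intro p v
    have hp : p.1 + 1 ≤ n := C.vLevel p v
    obtain ⟨j, rfl⟩ : ∃ j : Fin n, j.castSucc = p := ⟨⟨p.1, by omega⟩, Fin.ext rfl⟩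
    have h1 : eV j.castSucc v = eE j.succ (S.c j v) := (hconst j v).symm
    have h2 : eV' j.castSucc (fV j.castSucc v) = eE' j.succ (S'.c j (fV j.castSucc v)) :=
      (hconst' j (fV j.castSucc v)).symm
    rw [h1, h2, hφE j.succ (S.c j v), hisoc j v]
  have hrep : ∀ b : K.B, ∃ (q : Fin (n+1)) (ed : (S.N q).E), eE q ed = b := by
    intro b
    obtain ⟨⟨q, ed⟩, h⟩ := C.exists_edge b
    exact ⟨q, ed, h⟩
  -- dimension
  have hφdim : ∀ b, K'.dim (φ b) = K.dim b := by
    intro b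
    obtain ⟨q, ed, rfl⟩ := hrep b
    have h1 : K.dim (eE q ed) = q.1 := C.dimE q ed
    have h2 : K'.dim (eE' q (fE q ed)) = q.1 := C'.dimE q (fE q ed)
    rw [hφE q ed, h1, h2]
  -- thinness
  have hφthin : ∀ b, thin' (φ b) ↔ thin b := by
    intro b
    obtain ⟨q, ed, rfl⟩ := hrep b
    have h1 : thin (eE q ed) ↔ (S.N q).thinE ed := (C.thinEIff q ed).symm
    have h2 : thin' (eE' q (fE q ed)) ↔ (S'.N q).thinE (fE q ed) :=
      (C'.thinEIff q (fE q ed)).symm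
    rw [hφE q ed, h1, h2]
    exact ((hiso1 q).2.2.1 ed).symm
  -- augmentation
  have hφeps : ∀ b, K'.eps (φ b) = K.eps b := by
    intro b
    rcases Nat.eq_zero_or_pos (K.dim b) with h | h
    · rw [K'.eps_dim_zero hK'.unital (by rw [hφdim b, h]), K.eps_dim_zero hK.unital h]
    · rw [K'.eps_dim (φ b) (by rw [hφdim b]; omega), K.eps_dim b h]
  -- equivMapDomain helpers
  have emd_sub : ∀ (c d : K.B →₀ ℤ), Finsupp.equivMapDomain φ (c - d)
      = Finsupp.equivMapDomain φ c - Finsupp.equivMapDomain φ d := by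
    intro c d
    ext x'
    simp [Finsupp.equivMapDomain_apply]
  -- transfer of ∂⁺ on vertices
  have hP1 : ∀ (p : Fin (n+1)) (v : (S.N p).V),
      K'.bdp (Finsupp.single (φ (eV p v)) 1)
        = Finsupp.equivMapDomain φ (K.bdp (Finsupp.single (eV p v) 1)) := by
    intro p v
    have hdv : 0 < K.dim (eV p v) := C.dimV_pos p v
    obtain ⟨t, -, ht⟩ := hK.bdp_basis (eV p v) hdv
    have htmem : t ∈ (K.bdp (Finsupp.single (eV p v) 1)).support := by
      rw [ht]
      simp
    obtain ⟨ed, hed0⟩ := C.surjE' p t (C.mem_Gq_of_bdp (C.memV' p v) htmem)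
    have hed : eE p ed = t := hed0
    have hsrc : (S.N p).src ed = some v := (C.srcIff p ed v).2 (by rw [hed0]; exact htmem)
    have hsrc' : (S'.N p).src (fE p ed) = some (fV p v) := ((hiso1 p).1 ed v).1 hsrc
    have hmem' : eE' p (fE p ed) ∈ (K'.bdp (Finsupp.single (eV' p (fV p v)) 1)).support :=
      (C'.srcIff p (fE p ed) (fV p v)).1 hsrc'
    have hdv' : 0 < K'.dim (eV' p (fV p v)) := C'.dimV_pos p (fV p v)
    obtain ⟨t', -, ht'⟩ := hK'.bdp_basis (eV' p (fV p v)) hdv'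
    have ht'' : eE' p (fE p ed) = t' := by
      rw [ht'] at hmem'
      exact Finset.mem_singleton.1 (Finsupp.support_single_subset hmem')
    rw [hφV p v, ht', ht, Finsupp.equivMapDomain_single, ← ht'', ← hφE p ed, hed]
  -- transfer of ∂⁻ on vertices
  have hP2 : ∀ (p : Fin (n+1)) (v : (S.N p).V),
      K'.bdm (Finsupp.single (φ (eV p v)) 1)
        = Finsupp.equivMapDomain φ (K.bdm (Finsupp.single (eV p v) 1)) := by
    intro p v
    have hp : p.1 < n := by have := C.vLevel p v; omega
    rw [hφV p v]
    ext x'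
    rw [Finsupp.equivMapDomain_apply]
    have hxy : φ (φ.symm x') = x' := Equiv.apply_symm_apply φ x'
    have hmemiff : x' ∈ (K'.bdm (Finsupp.single (eV' p (fV p v)) 1)).support ↔
        φ.symm x' ∈ (K.bdm (Finsupp.single (eV p v) 1)).support := by
      constructor
      · intro hx
        obtain ⟨ed', hed'0⟩ := C'.surjE' p x' (C'.mem_Gq_of_bdm hp (C'.memV' p (fV p v)) hx)
        have hed' : eE' p ed' = x' := hed'0
        have htgt' : (S'.N p).tgt ed' = some (fV p v) := by
          apply (C'.tgtIff p ed' (fV p v)).2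
          rw [hed'0]
          exact hx
        obtain ⟨ed, rfl⟩ : ∃ ed, fE p ed = ed' := ⟨(fE p).symm ed', Equiv.apply_symm_apply _ _⟩
        have htgt : (S.N p).tgt ed = some v := ((hiso1 p).2.1 ed v).2 htgt'
        have hmem2 := (C.tgtIff p ed v).1 htgt
        have h3 : φ (eE p ed) = x' := by rw [hφE p ed, hed']
        have h4 : φ.symm x' = eE p ed := by rw [← h3, Equiv.symm_apply_apply]
        rwa [h4]
      · intro hx
        obtain ⟨ed, hed0⟩ := C.surjE' p (φ.symm x') (C.mem_Gq_of_bdm hp (C.memV' p v) hx)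
        have hed : eE p ed = φ.symm x' := hed0
        have htgt : (S.N p).tgt ed = some v := by
          apply (C.tgtIff p ed v).2
          rw [hed0]
          exact hx
        have htgt' := ((hiso1 p).2.1 ed v).1 htgt
        have hmem2 : eE' p (fE p ed) ∈ (K'.bdm (Finsupp.single (eV' p (fV p v)) 1)).support :=
          (C'.tgtIff p (fE p ed) (fV p v)).1 htgt'
        have h3 : eE' p (fE p ed) = x' := by
          have h30 := hφE p ed
          rw [hed, hxy] at h30
          exact h30.symm
        rwa [h3] at hmem2
    have h1 : K'.bdm (Finsupp.single (eV' p (fV p v)) 1) x' ≤ 1 := C'.Mall p (fV p v) x'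
    have h2 : K.bdm (Finsupp.single (eV p v) 1) (φ.symm x') ≤ 1 := C.Mall p v (φ.symm x')
    have h3 := K'.bdm_nonneg (Finsupp.single (eV' p (fV p v)) 1) x'
    have h4 := K.bdm_nonneg (Finsupp.single (eV p v) 1) (φ.symm x')
    rw [Finsupp.mem_support_iff, Finsupp.mem_support_iff] at hmemiff
    rcases eq_or_ne (K.bdm (Finsupp.single (eV p v) 1) (φ.symm x')) 0 with h5 | h5
    · rw [h5]
      by_contra h6
      exact (hmemiff.1 h6) h5
    · have h6 := hmemiff.2 h5
      omega
  -- the chain-level transfer of ∂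
  have hstep : ∀ m : K.B →₀ ℤ,
      (∀ bi ∈ m.support, K'.bd (φ bi) = Finsupp.equivMapDomain φ (K.bd bi)) →
      K'.bdc (Finsupp.equivMapDomain φ m) = Finsupp.equivMapDomain φ (K.bdc m) := by
    intro m hm
    have h1 : K'.bdc (Finsupp.equivMapDomain φ m)
        = m.sum fun bi k => k • K'.bd (φ bi) := by
      rw [FADC.bdc, Finsupp.equivMapDomain_eq_mapDomain]
      exact Finsupp.sum_mapDomain_index (fun b => by rw [zero_smul])
        (fun b m1 m2 => by rw [add_smul])
    have h2 : Finsupp.equivMapDomain φ (K.bdc m)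
        = m.sum fun bi k => k • Finsupp.equivMapDomain φ (K.bd bi) := by
      ext x'
      rw [Finsupp.equivMapDomain_apply, FADC.bdc_apply, Finsupp.sum_apply, Finsupp.sum]
      apply Finset.sum_congr rfl
      intro bi _
      rw [Finsupp.smul_apply, Finsupp.equivMapDomain_apply, smul_eq_mul]
    rw [h1, h2]
    apply Finsupp.sum_congr
    intro bi hbi
    rw [hm bi hbi]
  -- main boundary transfer, by induction along the loop-free order
  have hmain0 : ∀ b : K.B, Acc lt b → K'.bd (φ b) = Finsupp.equivMapDomain φ (K.bd b) := by
    intro b hacc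
    induction hacc with
    | intro b hb ih =>
    rcases Nat.eq_zero_or_pos (K.dim b) with hd0 | hdpos
    · rw [K.bd_of_dim_zero hd0, K'.bd_of_dim_zero (by rw [hφdim b, hd0]),
        Finsupp.equivMapDomain_zero]
    · obtain ⟨q, hdq⟩ : ∃ q, K.dim b = q + 1 := ⟨K.dim b - 1, by omega⟩
      have hqn : q + 1 ≤ n := by have := hK.atomic.1 b; omega
      have hmemG : b ∈ (C.Gq (q+1)).support := C.edge_complete lt hso hlf (q+1) hqn b hdq
      rcases C.Gq_split hmemG with hvert | ⟨w, hw, hbw⟩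
      · -- b is a vertex
        have hvert2 : b ∈ (C.xm ((⟨q, by omega⟩ : Fin (n+1)).1 + 1)).support := hvert
        obtain ⟨v, hv0⟩ := C.surjV ⟨q, by omega⟩ b hvert2
        have hv : eV ⟨q, by omega⟩ v = b := hv0
        have e1 : K.bd b = K.bdp (Finsupp.single b 1) - K.bdm (Finsupp.single b 1) := by
          rw [FADC.bdp_sub_bdm, FADC.bdc_single]
        have e2 : K'.bd (φ b) = K'.bdp (Finsupp.single (φ b) 1)
            - K'.bdm (Finsupp.single (φ b) 1) := by
          rw [FADC.bdp_sub_bdm, FADC.bdc_single]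
        rw [e1, e2, emd_sub, ← hv, hP1 ⟨q, by omega⟩ v, hP2 ⟨q, by omega⟩ v]
      · -- b is the positive boundary of a vertex w one level up
        have hq2 : q + 2 ≤ n := by
          by_contra hc
          have h0 : C.xm (q+1+1) = 0 := K.atomNeg_gt g (by omega)
          rw [h0] at hw
          simp at hw
        have hw2 : w ∈ (C.xm ((⟨q+1, by omega⟩ : Fin (n+1)).1 + 1)).support := hw
        obtain ⟨v, hv0⟩ := C.surjV ⟨q+1, by omega⟩ w hw2
        have hv : eV ⟨q+1, by omega⟩ v = w := hv0
        have hdw : 0 < K.dim w := by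
          have hdw0 : K.dim w = q+1+1 := C.xm_dim (show q+1+1 ≤ n by omega) w hw
          omega
        obtain ⟨t, -, ht⟩ := hK.bdp_basis w hdw
        have hbt : b = t := by
          rw [ht] at hbw
          exact Finset.mem_singleton.1 (Finsupp.support_single_subset hbw)
        rw [← hbt] at ht
        have eK : K.bd b = K.bdc (K.bdm (Finsupp.single w 1)) := by
          rw [← FADC.bdc_single, ← ht, FADC.bdc_bdp_eq_bdc_bdm]
        have hP1w : K'.bdp (Finsupp.single (φ w) 1)
            = Finsupp.equivMapDomain φ (K.bdp (Finsupp.single w 1)) := by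
          rw [← hv]
          exact hP1 ⟨q+1, by omega⟩ v
        have hφsingle : K'.bdp (Finsupp.single (φ w) 1) = Finsupp.single (φ b) 1 := by
          rw [hP1w, ht, Finsupp.equivMapDomain_single]
        have eK' : K'.bd (φ b) = K'.bdc (K'.bdm (Finsupp.single (φ w) 1)) := by
          rw [← FADC.bdc_single (K := K'), ← hφsingle, FADC.bdc_bdp_eq_bdc_bdm]
        have hP2w : K'.bdm (Finsupp.single (φ w) 1)
            = Finsupp.equivMapDomain φ (K.bdm (Finsupp.single w 1)) := by
          rw [← hv]
          exact hP2 ⟨q+1, by omega⟩ v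
        rw [eK, eK', hP2w]
        apply hstep
        intro bi hbi
        apply ih bi
        apply hlf1 w bi hbi b
        rw [ht]
        simp
  exact ⟨φ, hφdim, hφthin, fun b => hmain0 b (hwflt.apply b), hφeps⟩
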